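/- Every factor of a finite rich word is rich. -/
import Mathlib


/-- The finset of (distinct) palindromic factors of a finite word `w`,
including the empty word. -/
def palFactors {A : Type*} [DecidableEq A] (w : List A) : Finset (List A) :=
  ((w.inits.flatMap List.tails).filter (fun u => u.reverse = u)).toFinset

/-- A finite word `w` is rich if it has exactly `|w| + 1` distinct palindromic factors. -/
def Rich {A : Type*} [DecidableEq A] (w : List A) : Prop :=
  (palFactors w).card = w.length + 1

lemma mem_palFactors {A : Type*} [DecidableEq A] {u w : List A} :
    u ∈ palFactors w ↔ u <:+: w ∧ u.reverse = u := by
  simp only [palFactors, List.mem_toFinset, List.mem_filter, List.mem_flatMap,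
    List.mem_inits, List.mem_tails, decide_eq_true_eq]
  constructor
  · rintro ⟨⟨t, ht, hu⟩, hp⟩
    exact ⟨hu.isInfix.trans ht.isInfix, hp⟩
  · rintro ⟨⟨s, t, h⟩, hp⟩
    exact ⟨⟨s ++ u, ⟨t, by simpa using h⟩, ⟨s, rfl⟩⟩, hp⟩

/-- An infix of `w ++ [a]` is either a suffix of it or an infix of `w`. -/
lemma infix_snoc {A : Type*} {u w : List A} {a : A} (h : u <:+: (w ++ [a])) :
    u <:+ (w ++ [a]) ∨ u <:+: w := by
  obtain ⟨s, t, h⟩ := h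
  rcases t.eq_nil_or_concat with rfl | ⟨t', b, rfl⟩
  · exact Or.inl ⟨s, by simpa using h⟩
  · right
    have h' : (s ++ u ++ t') ++ [b] = w ++ [a] := by simpa [List.append_assoc] using h
    have := (List.append_inj' h' rfl).1
    exact ⟨s, t', this⟩

/-- A proper prefix of a suffix of `w ++ [a]` is an infix of `w`. -/
lemma prefix_of_suffix_snoc {A : Type*} {u v w : List A} {a : A}
    (huv : u <+: v) (hne : u ≠ v) (hv : v <:+ (w ++ [a])) : u <:+: w := by
  have hlt : u.length < v.length := by
    rcases Nat.lt_or_ge u.length v.length with h | h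
    · exact h
    · exact absurd (huv.eq_of_length (Nat.le_antisymm huv.length_le h)) hne
  obtain ⟨s, hs⟩ := hv
  have hvne : v ≠ [] := by
    intro h; subst h; simp at hlt
  have hv' : v.dropLast ++ [v.getLast hvne] = v := List.dropLast_append_getLast hvne
  have hs' : (s ++ v.dropLast) ++ [v.getLast hvne] = w ++ [a] := by
    rw [List.append_assoc, hv']; exact hs
  have hw : s ++ v.dropLast = w := (List.append_inj' hs' rfl).1
  have hud : u <+: v.dropLast := by
    rw [List.dropLast_eq_take, List.prefix_take_iff]
    exact ⟨huv, by omega⟩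
  exact hud.isInfix.trans (hw ▸ (List.suffix_append s v.dropLast).isInfix)

/-- Appending a letter adds at most one new palindromic factor. -/
lemma palFactors_snoc_card {A : Type*} [DecidableEq A] (w : List A) (a : A) :
    (palFactors (w ++ [a])).card ≤ (palFactors w).card + 1 := by
  have hdiff : (palFactors (w ++ [a]) \ palFactors w).card ≤ 1 := by
    rw [Finset.card_le_one]
    intro u hu v hv
    obtain ⟨hu1, hunw⟩ := Finset.mem_sdiff.1 hu
    obtain ⟨hv1, hvnw⟩ := Finset.mem_sdiff.1 hv
    obtain ⟨hui, hup⟩ := mem_palFactors.1 hu1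
    obtain ⟨hvi, hvp⟩ := mem_palFactors.1 hv1
    have hus : u <:+ (w ++ [a]) := by
      rcases infix_snoc hui with h | h
      · exact h
      · exact absurd (mem_palFactors.2 ⟨h, hup⟩) hunw
    have hvs : v <:+ (w ++ [a]) := by
      rcases infix_snoc hvi with h | h
      · exact h
      · exact absurd (mem_palFactors.2 ⟨h, hvp⟩) hvnw
    by_contra hne
    rcases List.suffix_or_suffix_of_suffix hus hvs with h | h
    · -- u <:+ v, so (palindromes) u <+: v properly, so u infix of w
      have hp : u <+: v := by rw [← hup, ← hvp, List.reverse_prefix]; exact h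
      exact hunw (mem_palFactors.2 ⟨prefix_of_suffix_snoc hp hne hvs, hup⟩)
    · have hp : v <+: u := by rw [← hup, ← hvp, List.reverse_prefix]; exact h
      exact hvnw (mem_palFactors.2 ⟨prefix_of_suffix_snoc hp (Ne.symm hne) hus, hvp⟩)
  have hsub : palFactors (w ++ [a]) ⊆ palFactors w ∪ (palFactors (w ++ [a]) \ palFactors w) := by
    intro x hx
    by_cases h : x ∈ palFactors w
    · exact Finset.mem_union_left _ h
    · exact Finset.mem_union_right _ (Finset.mem_sdiff.2 ⟨hx, h⟩)
  calc (palFactors (w ++ [a])).card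
      ≤ (palFactors w ∪ (palFactors (w ++ [a]) \ palFactors w)).card :=
        Finset.card_le_card hsub
    _ ≤ (palFactors w).card + (palFactors (w ++ [a]) \ palFactors w).card :=
        Finset.card_union_le _ _
    _ ≤ (palFactors w).card + 1 := by omega

lemma palFactors_append_card {A : Type*} [DecidableEq A] (p q : List A) :
    (palFactors (p ++ q)).card ≤ (palFactors p).card + q.length := by
  induction q using List.reverseRecOn with
  | nil => simp
  | append_singleton q a ih =>
      calc (palFactors (p ++ (q ++ [a]))).card
          = (palFactors ((p ++ q) ++ [a])).card := by rw [List.append_assoc]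
        _ ≤ (palFactors (p ++ q)).card + 1 := palFactors_snoc_card _ _
        _ ≤ (palFactors p).card + q.length + 1 := by omega
        _ = (palFactors p).card + (q ++ [a]).length := by simp [Nat.add_assoc]

lemma palFactors_card_le {A : Type*} [DecidableEq A] (w : List A) :
    (palFactors w).card ≤ w.length + 1 := by
  have := palFactors_append_card ([] : List A) w
  simp only [List.nil_append] at this
  have hnil : (palFactors ([] : List A)).card = 1 := by simp [palFactors]
  omega

lemma rich_of_prefix {A : Type*} [DecidableEq A] {w u : List A}
    (hw : Rich w) (hu : u <+: w) : Rich u := by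
  obtain ⟨q, rfl⟩ := hu
  have h1 := palFactors_append_card u q
  have h2 := palFactors_card_le u
  unfold Rich at hw ⊢
  simp only [List.length_append] at hw
  omega

lemma palFactors_reverse {A : Type*} [DecidableEq A] (w : List A) :
    palFactors w.reverse = (palFactors w).image List.reverse := by
  ext x
  simp only [mem_palFactors, Finset.mem_image]
  constructor
  · rintro ⟨hi, hp⟩
    refine ⟨x.reverse, ⟨?_, by rw [List.reverse_reverse, hp]⟩, by simp⟩
    rw [← List.reverse_infix]; simpa using hi
  · rintro ⟨y, ⟨hi, hp⟩, rfl⟩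
    exact ⟨List.reverse_infix.2 hi, by rw [List.reverse_reverse, hp]⟩

lemma rich_reverse {A : Type*} [DecidableEq A] {w : List A} (hw : Rich w) :
    Rich w.reverse := by
  unfold Rich at hw ⊢
  rw [palFactors_reverse,
    Finset.card_image_of_injective _ (fun a b h => by simpa using congrArg List.reverse h)]
  simpa using hw

/-- Every factor of a finite rich word is rich. -/
theorem factor_of_rich_isRich {A : Type*} [DecidableEq A]
    (w u : List A) (hw : Rich w) (hu : u <:+: w) : Rich u := by
  obtain ⟨s, t, rfl⟩ := hu
  have hsuf : (u ++ t) <:+ (s ++ u ++ t) := ⟨s, by simp [List.append_assoc]⟩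
  have h1 : Rich (u ++ t) := by
    have := rich_of_prefix (rich_reverse hw) (List.reverse_prefix.2 hsuf)
    simpa using rich_reverse this
  exact rich_of_prefix h1 ⟨t, rfl⟩
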